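/- Let x, y lie in the closed positive Weyl chamber and let α be a positive root. Define φ_α(x,y) = max{|x-y|, d(y, H_α)}, where H_α is the hyperplane perpendicular to α. Then there exist constants 0 < c₁ ≤ c₂ (depending only on the root system) such that c₁·φ_α(x,y) ≤ |x - σ_α y| ≤ c₂·φ_α(x,y). -/

import Mathlib

local notation "⟪" x ", " y "⟫" => @inner ℝ _ _ x y

lemma infDist_hyperplane {d : ℕ} (α y : EuclideanSpace ℝ (Fin d))
    (hα : α ≠ 0) (hy : 0 ≤ ⟪α, y⟫) :
    Metric.infDist y {z : EuclideanSpace ℝ (Fin d) | ⟪α, z⟫ = 0} = ⟪α, y⟫ / ‖α‖ := by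
  have hα' : (0:ℝ) < ‖α‖ := norm_pos_iff.mpr hα
  have hne : ({z : EuclideanSpace ℝ (Fin d) | ⟪α, z⟫ = 0}).Nonempty :=
    ⟨0, by simp⟩
  apply le_antisymm
  · have hmem : (y - (⟪α, y⟫ / ‖α‖ ^ 2) • α) ∈ {z : EuclideanSpace ℝ (Fin d) | ⟪α, z⟫ = 0} := by
      simp only [Set.mem_setOf_eq, inner_sub_right, real_inner_smul_right,
        real_inner_self_eq_norm_sq]
      field_simp
      ring
    calc Metric.infDist y {z : EuclideanSpace ℝ (Fin d) | ⟪α, z⟫ = 0}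
        ≤ dist y (y - (⟪α, y⟫ / ‖α‖ ^ 2) • α) := Metric.infDist_le_dist_of_mem hmem
      _ = ‖(⟪α, y⟫ / ‖α‖ ^ 2) • α‖ := by
          rw [dist_eq_norm]; congr 1; abel
      _ = ⟪α, y⟫ / ‖α‖ := by
          rw [norm_smul, Real.norm_eq_abs, abs_of_nonneg (by positivity)]
          field_simp
  · by_contra hlt
    push_neg at hlt
    obtain ⟨z, hz, hdz⟩ := (Metric.infDist_lt_iff hne).mp hlt
    have h1 : ⟪α, y⟫ = ⟪α, y - z⟫ := by
      rw [inner_sub_right, hz]; ring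
    have h2 : ⟪α, y - z⟫ ≤ ‖α‖ * ‖y - z‖ := real_inner_le_norm α (y - z)
    rw [dist_eq_norm, lt_div_iff₀ hα', mul_comm] at hdz
    linarith [h1 ▸ h2]

/-- For `x, y` in the closed positive Weyl chamber and a positive root `α`,
with `φ_α(x,y) = max{|x-y|, d(y, H_α)}`, there are constants `0 < c₁ ≤ c₂` depending
only on the root system with `c₁·φ_α(x,y) ≤ |x - σ_α y| ≤ c₂·φ_α(x,y)`. -/
theorem stmt_4 {d : ℕ}
    (Φp : Finset (EuclideanSpace ℝ (Fin d))) (h0 : (0 : EuclideanSpace ℝ (Fin d)) ∉ Φp) :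
    ∃ c₁ c₂ : ℝ, 0 < c₁ ∧ c₁ ≤ c₂ ∧
      ∀ α ∈ Φp, ∀ x y : EuclideanSpace ℝ (Fin d),
        (∀ a ∈ Φp, 0 ≤ ⟪a, x⟫) → (∀ a ∈ Φp, 0 ≤ ⟪a, y⟫) →
        c₁ * max ‖x - y‖ (Metric.infDist y {z : EuclideanSpace ℝ (Fin d) | ⟪α, z⟫ = 0})
            ≤ ‖x - (y - (2 * ⟪α, y⟫ / ‖α‖ ^ 2) • α)‖ ∧
        ‖x - (y - (2 * ⟪α, y⟫ / ‖α‖ ^ 2) • α)‖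
            ≤ c₂ * max ‖x - y‖
                (Metric.infDist y {z : EuclideanSpace ℝ (Fin d) | ⟪α, z⟫ = 0}) := by
  refine ⟨1/3, 3, by norm_num, by norm_num, ?_⟩
  intro α hα x y hx hy
  have hα0 : α ≠ 0 := fun h => h0 (h ▸ hα)
  have hαn : (0:ℝ) < ‖α‖ := norm_pos_iff.mpr hα0
  have hαy : 0 ≤ ⟪α, y⟫ := hy α hα
  have hαx : 0 ≤ ⟪α, x⟫ := hx α hα
  set r : ℝ := ⟪α, y⟫ / ‖α‖ with hr
  have hr0 : 0 ≤ r := div_nonneg hαy hαn.le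
  have hdist : Metric.infDist y {z : EuclideanSpace ℝ (Fin d) | ⟪α, z⟫ = 0} = r :=
    infDist_hyperplane α y hα0 hαy
  set σy : EuclideanSpace ℝ (Fin d) := y - (2 * ⟪α, y⟫ / ‖α‖ ^ 2) • α with hσy
  -- ‖y - σy‖ = 2r
  have hyσ : ‖y - σy‖ = 2 * r := by
    have : y - σy = (2 * ⟪α, y⟫ / ‖α‖ ^ 2) • α := by rw [hσy]; abel
    rw [this, norm_smul, Real.norm_eq_abs, abs_of_nonneg (by positivity)]
    rw [hr]; field_simp
  -- ‖x - σy‖ ≥ r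
  have hinner : ⟪α, x - σy⟫ = ⟪α, x⟫ + ⟪α, y⟫ := by
    rw [hσy, inner_sub_right, inner_sub_right, real_inner_smul_right,
      real_inner_self_eq_norm_sq]
    field_simp
    ring
  have hlow : r ≤ ‖x - σy‖ := by
    have h2 : ⟪α, x - σy⟫ ≤ ‖α‖ * ‖x - σy‖ := real_inner_le_norm α (x - σy)
    rw [hr, div_le_iff₀ hαn, mul_comm]
    nlinarith
  have htri1 : ‖x - σy‖ ≤ ‖x - y‖ + 2 * r := by
    have : x - σy = (x - y) + (y - σy) := by abel
    rw [this]
    calc ‖(x - y) + (y - σy)‖ ≤ ‖x - y‖ + ‖y - σy‖ := norm_add_le _ _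
      _ = ‖x - y‖ + 2 * r := by rw [hyσ]
  have htri2 : ‖x - y‖ ≤ ‖x - σy‖ + 2 * r := by
    have h' : x - y = (x - σy) - (y - σy) := by abel
    rw [h']
    calc ‖(x - σy) - (y - σy)‖ ≤ ‖x - σy‖ + ‖y - σy‖ := norm_sub_le _ _
      _ = ‖x - σy‖ + 2 * r := by rw [hyσ]
  rw [hdist]
  constructor
  · rcases le_total ‖x - y‖ (3 * r) with h | h
    · have hm : max ‖x - y‖ r ≤ 3 * r := max_le h (by linarith)
      nlinarith
    · have : max ‖x - y‖ r = ‖x - y‖ := max_eq_left (by nlinarith)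
      rw [this]; nlinarith
  · have h1 : ‖x - y‖ ≤ max ‖x - y‖ r := le_max_left _ _
    have h2 : r ≤ max ‖x - y‖ r := le_max_right _ _
    nlinarith
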